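/- For the zonoid regression depth at the population level, ZRD(θ, P̄) = ZD(0, law of (Y - Wᵀθ)W): under E(ε|X) = 0 and E(WWᵀ) positive definite, the mean of (Y - Wᵀθ)W is E(WWᵀ)(θ₀ - θ), which is 0 if and only if θ = θ₀; since zonoid depth equals 1 exactly at the mean, ZRD(·, P̄) is uniquely maximized at θ₀ with value 1. -/

import Mathlib

open MeasureTheory Matrix Filter

-- tail lemma
theorem tail_small {Ω : Type*} [MeasurableSpace Ω] (μ : Measure Ω) [IsProbabilityMeasure μ]
    (f : Ω → ℝ) (hf : Integrable f μ) {c : ℝ} (hc : 0 < c) :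
    ∃ M : ℝ, 0 ≤ M ∧ ∫ ω, max (|f ω| - M) 0 ∂μ ≤ c := by
  have hlim : Tendsto (fun n : ℕ => ∫ ω, max (|f ω| - n) 0 ∂μ) atTop
      (nhds (∫ ω, (0:ℝ) ∂μ)) := by
    apply tendsto_integral_of_dominated_convergence (fun ω => |f ω|)
    · intro n
      exact ((hf.abs.sub (integrable_const _)).1).sup aestronglyMeasurable_const
    · exact hf.abs
    · intro n
      filter_upwards with ω
      rw [Real.norm_eq_abs, abs_of_nonneg (le_max_right _ _)]
      refine max_le ?_ (abs_nonneg _)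
      simp [sub_le_self_iff]
    · filter_upwards with ω
      apply tendsto_atTop_of_eventually_const (i₀ := ⌈|f ω|⌉₊)
      intro n hn
      have h2 : |f ω| ≤ (n:ℝ) := le_trans (Nat.le_ceil _) (by exact_mod_cast hn)
      have : |f ω| - n ≤ 0 := by linarith
      simp [max_eq_right this]
  rw [integral_zero] at hlim
  have := hlim.eventually_lt_const hc
  obtain ⟨n, hn⟩ := this.exists
  exact ⟨n, Nat.cast_nonneg n, le_of_lt hn⟩
/-- Population zonoid depth of a point `p` with respect to the law of the random vector `Z`. -/
noncomputable def popZonoidDepth {Ω : Type*} [MeasurableSpace Ω] (μ : MeasureTheory.Measure Ω)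
    {m : ℕ} (Z : Ω → Fin m → ℝ) (p : Fin m → ℝ) : ℝ :=
  sSup {α : ℝ | 0 < α ∧ α ≤ 1 ∧ ∃ g : (Fin m → ℝ) → ℝ, Measurable g ∧
    (∀ t, 0 ≤ g t ∧ g t ≤ 1 / α) ∧ (∫ ω, g (Z ω) ∂μ) = 1 ∧
    ∀ i, (∫ ω, g (Z ω) * Z ω i ∂μ) = p i}

theorem stmt15 {d : ℕ} {Ω : Type*} [MeasurableSpace Ω] (μ : Measure Ω) [IsProbabilityMeasure μ]
    (X : Ω → Fin d → ℝ) (ε : Ω → ℝ) (Y : Ω → ℝ) (θ₀ : Fin (d + 1) → ℝ)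
    (hX : Measurable X) (hε : Measurable ε)
    (W : Ω → Fin (d + 1) → ℝ) (hW : ∀ ω, W ω = Fin.cons 1 (X ω))
    (hY : ∀ ω, Y ω = W ω ⬝ᵥ θ₀ + ε ω)
    (hcond : μ[ε | MeasurableSpace.comap X inferInstance] =ᵐ[μ] 0)
    (hint : ∀ θ : Fin (d + 1) → ℝ, ∀ i, Integrable (fun ω => (Y ω - W ω ⬝ᵥ θ) * W ω i) μ)
    (Sbar : Matrix (Fin (d + 1)) (Fin (d + 1)) ℝ)
    (hSbar : ∀ i j, Sbar i j = ∫ ω, W ω i * W ω j ∂μ)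
    (hSbarpd : Sbar.PosDef) :
    (∀ θ : Fin (d + 1) → ℝ, ∀ i,
      (∫ ω, (Y ω - W ω ⬝ᵥ θ) * W ω i ∂μ) = Sbar.mulVec (θ₀ - θ) i) ∧
    (∀ θ : Fin (d + 1) → ℝ, Sbar.mulVec (θ₀ - θ) = 0 ↔ θ = θ₀) ∧
    popZonoidDepth μ (fun ω => (Y ω - W ω ⬝ᵥ θ₀) • W ω) 0 = 1 ∧
    (∀ θ : Fin (d + 1) → ℝ, popZonoidDepth μ (fun ω => (Y ω - W ω ⬝ᵥ θ) • W ω) 0 ≤ 1) ∧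
    ∀ θ : Fin (d + 1) → ℝ, popZonoidDepth μ (fun ω => (Y ω - W ω ⬝ᵥ θ) • W ω) 0 = 1 → θ = θ₀ := by
  -- measurability preliminaries
  have hWmeas : Measurable W := by
    have : W = fun ω => Fin.cons 1 (X ω) := funext hW
    rw [this]
    refine measurable_pi_iff.mpr fun i => ?_
    induction i using Fin.cases with
    | zero => simp only [Fin.cons_zero]; exact measurable_const
    | succ j => simp only [Fin.cons_succ]; exact (measurable_pi_apply j).comp hX
  have hdot : ∀ θ : Fin (d+1) → ℝ, Measurable (fun ω => W ω ⬝ᵥ θ) := by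
    intro θ
    simp only [dotProduct]
    exact Finset.measurable_sum _ fun i _ =>
      ((measurable_pi_apply i).comp hWmeas).mul_const _
  have hYmeas : Measurable Y := by
    have : Y = fun ω => W ω ⬝ᵥ θ₀ + ε ω := funext hY
    rw [this]; exact (hdot θ₀).add hε
  have hZmeas : ∀ θ : Fin (d+1) → ℝ,
      Measurable (fun ω => (Y ω - W ω ⬝ᵥ θ) • W ω) := by
    intro θ
    refine measurable_pi_iff.mpr fun i => ?_
    simp only [Pi.smul_apply, smul_eq_mul]
    exact (hYmeas.sub (hdot θ)).mul ((measurable_pi_apply i).comp hWmeas)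
  -- integrability of ε * W i
  have hεW_int : ∀ i, Integrable (fun ω => ε ω * W ω i) μ := by
    intro i
    have h := hint θ₀ i
    have he : ∀ ω, (Y ω - W ω ⬝ᵥ θ₀) * W ω i = ε ω * W ω i := by
      intro ω; rw [hY ω]; ring
    exact h.congr (Filter.Eventually.of_forall fun ω => he ω)
  have hε_int : Integrable ε μ := by
    have h := hεW_int 0
    have he : ∀ ω, ε ω * W ω 0 = ε ω := by intro ω; rw [hW ω]; simp
    exact h.congr (Filter.Eventually.of_forall he)
  -- E[ε W i] = 0
  have hεW_zero : ∀ i, (∫ ω, ε ω * W ω i ∂μ) = 0 := by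
    intro i
    have hm : MeasurableSpace.comap X inferInstance ≤ (by infer_instance : MeasurableSpace Ω) :=
      hX.comap_le
    set m := MeasurableSpace.comap X inferInstance with hm_def
    have hWi_meas : Measurable[m] (fun ω => W ω i) := by
      have hXm : Measurable[m] X := fun s hs => ⟨s, hs, rfl⟩
      have hci : Measurable (fun v : Fin d → ℝ => (Fin.cons (1:ℝ) v : Fin (d+1) → ℝ) i) := by
        induction i using Fin.cases with
        | zero => simp only [Fin.cons_zero]; exact measurable_const
        | succ j => simp only [Fin.cons_succ]; exact measurable_pi_apply j
      have := hci.comp hXm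
      have he : (fun ω => W ω i) = fun ω => (Fin.cons (1:ℝ) (X ω) : Fin (d+1) → ℝ) i := by
        funext ω; rw [hW ω]
      rw [he]; exact this
    have hfg : Integrable ((fun ω => W ω i) * ε) μ := by
      have := hεW_int i
      exact this.congr (Filter.Eventually.of_forall fun ω => by
        simp [Pi.mul_apply, mul_comm])
    have key : μ[(fun ω => W ω i) * ε|m] =ᵐ[μ] (fun ω => W ω i) * μ[ε|m] :=
      condExp_mul_of_stronglyMeasurable_left hWi_meas.stronglyMeasurable hfg hε_int
    have hze : (fun ω => W ω i) * μ[ε|m] =ᵐ[μ] 0 := by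
      filter_upwards [hcond] with ω hω
      simp [Pi.mul_apply, hω]
    have h1 : (∫ ω, ((fun ω => W ω i) * ε) ω ∂μ)
        = ∫ ω, (μ[(fun ω => W ω i) * ε|m]) ω ∂μ :=
      (integral_condExp (μ := μ) (f := (fun ω => W ω i) * ε) hm).symm
    have h2 : (∫ ω, (μ[(fun ω => W ω i) * ε|m]) ω ∂μ) = 0 := by
      rw [integral_congr_ae (key.trans hze)]; simp
    have h3 : (∫ ω, ε ω * W ω i ∂μ) = ∫ ω, ((fun ω => W ω i) * ε) ω ∂μ := by
      apply integral_congr_ae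
      filter_upwards with ω
      simp [Pi.mul_apply, mul_comm]
    rw [h3, h1, h2]
  -- Integrability of W i * W j
  have hWW_int : ∀ i j, Integrable (fun ω => W ω i * W ω j) μ := by
    intro i j
    have h1 := hint (θ₀ - Pi.single j 1) i
    have h2 : ∀ ω, (Y ω - W ω ⬝ᵥ (θ₀ - Pi.single j 1)) * W ω i
        = W ω j * W ω i + ε ω * W ω i := by
      intro ω
      rw [hY ω, dotProduct_sub, dotProduct_single]
      ring
    have h3 : Integrable (fun ω => W ω j * W ω i + ε ω * W ω i) μ :=
      h1.congr (Filter.Eventually.of_forall h2)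
    have h4 := h3.sub (hεW_int i)
    exact h4.congr (Filter.Eventually.of_forall fun ω => by simp only [Pi.sub_apply]; ring)
  -- Part 1 : the mean
  have hmean : ∀ θ : Fin (d+1) → ℝ, ∀ i,
      (∫ ω, (Y ω - W ω ⬝ᵥ θ) * W ω i ∂μ) = Sbar.mulVec (θ₀ - θ) i := by
    intro θ i
    have hrw : (fun ω => (Y ω - W ω ⬝ᵥ θ) * W ω i)
        = fun ω => (∑ j, (θ₀ - θ) j * (W ω i * W ω j)) + ε ω * W ω i := by
      funext ω
      rw [hY ω]
      have h1 : (W ω ⬝ᵥ θ₀ + ε ω - W ω ⬝ᵥ θ) * W ω i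
          = (W ω ⬝ᵥ (θ₀ - θ)) * W ω i + ε ω * W ω i := by
        rw [dotProduct_sub]; ring
      rw [h1, dotProduct, Finset.sum_mul]
      congr 1
      exact Finset.sum_congr rfl fun j _ => by simp [Pi.sub_apply]; ring
    have hsum_int : Integrable (fun ω => ∑ j, (θ₀ - θ) j * (W ω i * W ω j)) μ :=
      integrable_finset_sum _ fun j _ => (hWW_int i j).const_mul _
    rw [hrw, integral_add hsum_int (hεW_int i), hεW_zero i, add_zero,
      integral_finset_sum _ fun j _ => (hWW_int i j).const_mul _]
    simp only [Matrix.mulVec, dotProduct, hSbar]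
    refine Finset.sum_congr rfl fun j _ => ?_
    rw [integral_const_mul]
    simp only [Pi.sub_apply]
    ring
  -- Part 2
  have hpd : ∀ θ : Fin (d+1) → ℝ, Sbar.mulVec (θ₀ - θ) = 0 ↔ θ = θ₀ := by
    intro θ
    constructor
    · intro h
      by_contra hne
      have hv : θ₀ - θ ≠ 0 := sub_ne_zero.mpr (Ne.symm hne)
      have hpos := hSbarpd.dotProduct_mulVec_pos hv
      rw [h] at hpos
      simp at hpos
    · intro h; rw [h]; simp
  refine ⟨hmean, hpd, ?_, ?_, ?_⟩
  · -- depth at θ₀ is 1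
    rw [popZonoidDepth]
    apply le_antisymm
    · exact Real.sSup_le (fun a ha => ha.2.1) zero_le_one
    · apply le_csSup ⟨1, fun a ha => ha.2.1⟩
      refine ⟨one_pos, le_refl 1, fun _ => (1:ℝ), measurable_const,
        fun t => ⟨zero_le_one, by norm_num⟩, by simp, ?_⟩
      intro i
      simp only [one_mul, Pi.smul_apply, smul_eq_mul, Pi.zero_apply]
      have h := hmean θ₀ i
      simpa using h
  · -- depth ≤ 1
    intro θ
    rw [popZonoidDepth]
    exact Real.sSup_le (fun a ha => ha.2.1) zero_le_one
  · -- uniqueness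
    intro θ hθ
    rw [popZonoidDepth] at hθ
    refine (hpd θ).mp ?_
    by_contra hne
    obtain ⟨i, hi⟩ : ∃ i, Sbar.mulVec (θ₀ - θ) i ≠ 0 := by
      by_contra h
      push_neg at h
      exact hne (funext h)
    -- the random vector and its i-th coordinate
    set f : Ω → ℝ := fun ω => (Y ω - W ω ⬝ᵥ θ) * W ω i with hf_def
    have hf_int : Integrable f μ := hint θ i
    have hfabs : Integrable (fun ω => |f ω|) μ := hf_int.abs
    set c := |Sbar.mulVec (θ₀ - θ) i| with hc_def
    have hc : 0 < c := abs_pos.mpr hi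
    have hfm : (∫ ω, f ω ∂μ) = Sbar.mulVec (θ₀ - θ) i := hmean θ i
    obtain ⟨M, hM0, hMtail⟩ := tail_small μ f hf_int (half_pos hc)
    set I := ∫ ω, |f ω| ∂μ with hI_def
    have hI0 : 0 ≤ I := integral_nonneg fun ω => abs_nonneg _
    set K := I + M + 1 with hK_def
    have hK : 0 < K := by rw [hK_def]; linarith
    set δ₀ := c / (2 * K) with hδ₀_def
    have hδ₀ : 0 < δ₀ := div_pos hc (by linarith)
    have hSne : Set.Nonempty {α : ℝ | 0 < α ∧ α ≤ 1 ∧ ∃ g : (Fin (d+1) → ℝ) → ℝ, Measurable g ∧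
        (∀ t, 0 ≤ g t ∧ g t ≤ 1 / α) ∧
        (∫ ω, g ((fun ω => (Y ω - W ω ⬝ᵥ θ) • W ω) ω) ∂μ) = 1 ∧
        ∀ i, (∫ ω, g ((fun ω => (Y ω - W ω ⬝ᵥ θ) • W ω) ω) *
          (fun ω => (Y ω - W ω ⬝ᵥ θ) • W ω) ω i ∂μ) = (0 : Fin (d+1) → ℝ) i} := by
      by_contra h
      rw [Set.not_nonempty_iff_eq_empty] at h
      rw [h, Real.sSup_empty] at hθ
      norm_num at hθ
    have hlt : 1 / (1 + δ₀) < sSup _ := lt_of_lt_of_le (by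
      rw [div_lt_one (by linarith)]; linarith) hθ.ge
    obtain ⟨α, hαS, hαgt⟩ := exists_lt_of_lt_csSup hSne hlt
    obtain ⟨hα0, hα1, g, hg_meas, hg_bd, hg_int1, hg_mean⟩ := hαS
    set δ := 1 / α - 1 with hδ_def
    have hαinv : 1 ≤ 1 / α := by
      rw [le_div_iff₀ hα0]; linarith
    have hδ0 : 0 ≤ δ := by rw [hδ_def]; linarith
    have hδlt : δ < δ₀ := by
      have h1 : 1 / α < 1 + δ₀ := by
        rw [div_lt_iff₀ hα0]
        have h2 : 1 < α * (1 + δ₀) := (div_lt_iff₀ (by linarith)).mp hαgt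
        nlinarith
      rw [hδ_def]; linarith
    -- the weight function
    set G : Ω → ℝ := fun ω => g ((Y ω - W ω ⬝ᵥ θ) • W ω) with hG_def
    have hG_meas : Measurable G := hg_meas.comp (hZmeas θ)
    have hG_bd0 : ∀ ω, 0 ≤ G ω := fun ω => (hg_bd _).1
    have hG_bd1 : ∀ ω, G ω ≤ 1 / α := fun ω => (hg_bd _).2
    have hG_int : Integrable G μ := by
      refine Integrable.mono' (integrable_const (1 / α)) hG_meas.aestronglyMeasurable ?_
      filter_upwards with ω
      rw [Real.norm_eq_abs, abs_of_nonneg (hG_bd0 ω)]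
      exact hG_bd1 ω
    have hG_one : (∫ ω, G ω ∂μ) = 1 := hg_int1
    have hGf_int : Integrable (fun ω => G ω * f ω) μ :=
      hf_int.bdd_mul hG_meas.aestronglyMeasurable
        (c := 1 / α) (Filter.Eventually.of_forall fun ω => by rw [Real.norm_eq_abs, abs_of_nonneg (hG_bd0 ω)]; exact hG_bd1 ω)
    have hGf_zero : (∫ ω, G ω * f ω ∂μ) = 0 := by
      have h := hg_mean i
      simp only [Pi.smul_apply, smul_eq_mul, Pi.zero_apply] at h
      exact h
    clear_value f c I K δ₀ δ G
    -- positive and negative parts of 1 - G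
    set p : Ω → ℝ := fun ω => max (1 - G ω) 0 with hp_def
    set q : Ω → ℝ := fun ω => max (G ω - 1) 0 with hq_def
    have hp_meas : Measurable p := (measurable_const.sub hG_meas).max measurable_const
    have hq_meas : Measurable q := (hG_meas.sub measurable_const).max measurable_const
    have hp0 : ∀ ω, 0 ≤ p ω := fun ω => le_max_right _ _
    have hq0 : ∀ ω, 0 ≤ q ω := fun ω => le_max_right _ _
    have hp1 : ∀ ω, p ω ≤ 1 := fun ω => max_le (by linarith [hG_bd0 ω]) zero_le_one
    have hqδ : ∀ ω, q ω ≤ δ := fun ω => max_le (by rw [hδ_def]; linarith [hG_bd1 ω]) hδ0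
    have hpq : ∀ ω, 1 - G ω = p ω - q ω := by
      intro ω
      rcases le_total (G ω) 1 with h | h
      · rw [hp_def, hq_def]
        simp only []
        rw [max_eq_left (by linarith), max_eq_right (by linarith)]
        ring
      · rw [hp_def, hq_def]
        simp only []
        rw [max_eq_right (by linarith), max_eq_left (by linarith)]
        ring
    clear_value p q
    have hp_int : Integrable p μ := by
      refine Integrable.mono' (integrable_const 1) hp_meas.aestronglyMeasurable ?_
      filter_upwards with ω
      rw [Real.norm_eq_abs, abs_of_nonneg (hp0 ω)]; exact hp1 ω
    have hq_int : Integrable q μ := by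
      refine Integrable.mono' (integrable_const δ) hq_meas.aestronglyMeasurable ?_
      filter_upwards with ω
      rw [Real.norm_eq_abs, abs_of_nonneg (hq0 ω)]; exact hqδ ω
    have h1G : (∫ ω, (1 - G ω) ∂μ) = 0 := by
      rw [integral_sub (integrable_const 1) hG_int, hG_one]
      simp
    have hpq_int : (∫ ω, p ω ∂μ) = ∫ ω, q ω ∂μ := by
      have h := h1G
      rw [show (fun ω => 1 - G ω) = fun ω => p ω - q ω from funext hpq,
        integral_sub hp_int hq_int] at h
      linarith
    have hq_le : (∫ ω, q ω ∂μ) ≤ δ := by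
      calc (∫ ω, q ω ∂μ) ≤ ∫ _, δ ∂μ := integral_mono hq_int (integrable_const δ) hqδ
        _ = δ := by simp
    have hp_le : (∫ ω, p ω ∂μ) ≤ δ := hpq_int.trans_le hq_le
    -- integrable products
    have hpf_int : Integrable (fun ω => p ω * f ω) μ :=
      hf_int.bdd_mul hp_meas.aestronglyMeasurable
        (c := 1) (Filter.Eventually.of_forall fun ω => by rw [Real.norm_eq_abs, abs_of_nonneg (hp0 ω)]; exact hp1 ω)
    have hqf_int : Integrable (fun ω => q ω * f ω) μ :=
      hf_int.bdd_mul hq_meas.aestronglyMeasurable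
        (c := δ) (Filter.Eventually.of_forall fun ω => by rw [Real.norm_eq_abs, abs_of_nonneg (hq0 ω)]; exact hqδ ω)
    have hpfa_int : Integrable (fun ω => p ω * |f ω|) μ :=
      hfabs.bdd_mul hp_meas.aestronglyMeasurable
        (c := 1) (Filter.Eventually.of_forall fun ω => by rw [Real.norm_eq_abs, abs_of_nonneg (hp0 ω)]; exact hp1 ω)
    have hqfa_int : Integrable (fun ω => q ω * |f ω|) μ :=
      hfabs.bdd_mul hq_meas.aestronglyMeasurable
        (c := δ) (Filter.Eventually.of_forall fun ω => by rw [Real.norm_eq_abs, abs_of_nonneg (hq0 ω)]; exact hqδ ω)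
    have htail_int : Integrable (fun ω => max (|f ω| - M) 0) μ :=
      (hfabs.sub (integrable_const M)).pos_part
    -- bound on ∫ q |f|
    have key1 : (∫ ω, q ω * |f ω| ∂μ) ≤ δ * I := by
      calc (∫ ω, q ω * |f ω| ∂μ) ≤ ∫ ω, δ * |f ω| ∂μ := by
            refine integral_mono hqfa_int (hfabs.const_mul δ) fun ω => ?_
            exact mul_le_mul_of_nonneg_right (hqδ ω) (abs_nonneg _)
        _ = δ * I := by rw [hI_def]; exact integral_const_mul δ _
    -- bound on ∫ p |f|
    have key2 : (∫ ω, p ω * |f ω| ∂μ) ≤ M * δ + c / 2 := by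
      have hpt : ∀ ω, p ω * |f ω| ≤ p ω * M + max (|f ω| - M) 0 := by
        intro ω
        rcases le_total (|f ω|) M with h | h
        · have h1 := mul_le_mul_of_nonneg_left h (hp0 ω)
          have h2 := le_max_right (|f ω| - M) 0
          linarith
        · have h1 : p ω * (|f ω| - M) ≤ |f ω| - M :=
            mul_le_of_le_one_left (by linarith) (hp1 ω)
          have h2 : max (|f ω| - M) 0 = |f ω| - M := max_eq_left (by linarith)
          nlinarith
      calc (∫ ω, p ω * |f ω| ∂μ)
          ≤ ∫ ω, (p ω * M + max (|f ω| - M) 0) ∂μ :=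
            integral_mono hpfa_int ((hp_int.mul_const M).add htail_int) hpt
        _ = (∫ ω, p ω ∂μ) * M + ∫ ω, max (|f ω| - M) 0 ∂μ := by
            rw [integral_add (hp_int.mul_const M) htail_int, integral_mul_const]
        _ ≤ δ * M + c / 2 :=
            add_le_add (mul_le_mul_of_nonneg_right hp_le hM0) hMtail
        _ = M * δ + c / 2 := by ring
    -- final contradiction
    have hsplit : c ≤ (∫ ω, p ω * |f ω| ∂μ) + ∫ ω, q ω * |f ω| ∂μ := by
      have he1 : (∫ ω, (1 - G ω) * f ω ∂μ) = ∫ ω, f ω ∂μ - ∫ ω, G ω * f ω ∂μ := by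
        rw [← integral_sub hf_int hGf_int]
        congr 1; funext ω; ring
      have he2 : (∫ ω, (1 - G ω) * f ω ∂μ) = Sbar.mulVec (θ₀ - θ) i := by
        rw [he1, hGf_zero, sub_zero, hfm]
      have he3 : (∫ ω, (1 - G ω) * f ω ∂μ)
          = (∫ ω, p ω * f ω ∂μ) - ∫ ω, q ω * f ω ∂μ := by
        rw [← integral_sub hpf_int hqf_int]
        congr 1; funext ω
        rw [show (1 - G ω) = p ω - q ω from hpq ω]; ring
      have hb1' : |∫ ω, p ω * f ω ∂μ| ≤ ∫ ω, |p ω * f ω| ∂μ := by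
        have h' := norm_integral_le_integral_norm (μ := μ) (fun ω => p ω * f ω)
        simpa only [Real.norm_eq_abs] using h'
      have hb1'' : (∫ ω, |p ω * f ω| ∂μ) = ∫ ω, p ω * |f ω| ∂μ := by
        congr 1; funext ω; rw [abs_mul, abs_of_nonneg (hp0 ω)]
      have hb1 : |∫ ω, p ω * f ω ∂μ| ≤ ∫ ω, p ω * |f ω| ∂μ := hb1''.symm ▸ hb1'
      have hb2' : |∫ ω, q ω * f ω ∂μ| ≤ ∫ ω, |q ω * f ω| ∂μ := by
        have h' := norm_integral_le_integral_norm (μ := μ) (fun ω => q ω * f ω)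
        simpa only [Real.norm_eq_abs] using h'
      have hb2'' : (∫ ω, |q ω * f ω| ∂μ) = ∫ ω, q ω * |f ω| ∂μ := by
        congr 1; funext ω; rw [abs_mul, abs_of_nonneg (hq0 ω)]
      have hb2 : |∫ ω, q ω * f ω ∂μ| ≤ ∫ ω, q ω * |f ω| ∂μ := hb2''.symm ▸ hb2'
      have : c = |(∫ ω, p ω * f ω ∂μ) - ∫ ω, q ω * f ω ∂μ| := by
        rw [hc_def, ← he2, he3]
      rw [this]
      calc |(∫ ω, p ω * f ω ∂μ) - ∫ ω, q ω * f ω ∂μ|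
          ≤ |∫ ω, p ω * f ω ∂μ| + |∫ ω, q ω * f ω ∂μ| := abs_sub _ _
        _ ≤ (∫ ω, p ω * |f ω| ∂μ) + ∫ ω, q ω * |f ω| ∂μ := add_le_add hb1 hb2
    clear hθ hSne hlt hg_meas hg_bd hg_int1 hg_mean hmean hpd hint hSbar hcond hY hW
      hεW_int hWW_int hεW_zero hdot hZmeas hYmeas hWmeas hε hX hε_int hf_int hfabs
      hG_meas hG_int hGf_int hGf_zero hG_one hp_meas hq_meas hp_int hq_int hpf_int
      hqf_int hpfa_int hqfa_int htail_int
    have hδK : δ * K < c / 2 := by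
      have h1 : δ * K < δ₀ * K := mul_lt_mul_of_pos_right hδlt hK
      have h2 : δ₀ * K = c / 2 := by
        rw [hδ₀_def]; field_simp
      linarith
    have hfin : δ * I + M * δ ≤ δ * K := by
      have : I + M ≤ K := by rw [hK_def]; linarith
      nlinarith
    linarith
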